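/- (Kleisli extension distributes over probabilistic choice of sets.) Let X and Y be countable sets, f : X → C(Y), p ∈ [0,1], and S, T ∈ C(X). Then f†(S ⊕_p T) = f†(S) ⊕_p f†(T). -/
import Mathlib


open scoped Classical
open Filter Topology

namespace DOL

/-- A discrete probability distribution on `X`: pointwise nonnegative with total mass 1. -/
def IsDist {X : Type*} (μ : X → ℝ) : Prop := (∀ x, 0 ≤ μ x) ∧ HasSum μ 1

/-- The point-mass (Dirac) distribution at `x`. -/
noncomputable def dirac {X : Type*} (x : X) : X → ℝ := fun y => if y = x then 1 else 0

/-- The order `⊑_D` on distributions over `X_⊥ = Option X` (with `⊥ = none`):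
pointwise comparison at proper states only. -/
def dle {X : Type*} (μ ν : Option X → ℝ) : Prop := ∀ x : X, μ (some x) ≤ ν (some x)

/-- Up-closure of a set of distributions over `X_⊥` (within `D(X_⊥)`). -/
def upClo {X : Type*} (S : Set (Option X → ℝ)) : Set (Option X → ℝ) :=
  {ν | IsDist ν ∧ ∃ μ ∈ S, dle μ ν}

/-- Convexity of a set of functions, with pointwise convex combinations. -/
def IsConvexSet {X : Type*} (S : Set (X → ℝ)) : Prop :=
  ∀ μ ∈ S, ∀ ν ∈ S, ∀ p : ℝ, 0 ≤ p → p ≤ 1 →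
    (fun x => p * μ x + (1 - p) * ν x) ∈ S

/-- Membership in `C(X)`: nonempty, consisting of distributions over `X_⊥`,
convex, (topologically) closed, and up-closed. -/
def memC {X : Type*} (S : Set (Option X → ℝ)) : Prop :=
  S.Nonempty ∧ (∀ μ ∈ S, IsDist μ) ∧ IsConvexSet S ∧ IsClosed S ∧ upClo S = S

/-- Bottom-lifting of a set-valued map: `f_⊥(⊥) = ↑{δ_⊥}`. -/
noncomputable def fbot {X Y : Type*} (f : X → Set (Option Y → ℝ)) :
    Option X → Set (Option Y → ℝ) :=
  fun x => match x with
  | some x => f x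
  | none => upClo {dirac (none : Option Y)}

/-- Kleisli extension: all convex mixtures `∑_{x ∈ supp μ} μ(x)·ν_x` with `μ ∈ S`
and `ν_x ∈ f_⊥(x)` on the support of `μ`. -/
noncomputable def kleisli {X Y : Type*} (f : X → Set (Option Y → ℝ))
    (S : Set (Option X → ℝ)) : Set (Option Y → ℝ) :=
  {ξ | ∃ μ ∈ S, ∃ ν : Option X → (Option Y → ℝ),
    (∀ x, 0 < μ x → ν x ∈ fbot f x) ∧ (∀ y, ξ y = ∑' x, μ x * ν x y)}

/-- Probabilistic choice between sets of distributions. -/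
def pchoice {X : Type*} (p : ℝ) (S T : Set (Option X → ℝ)) : Set (Option X → ℝ) :=
  {ξ | ∃ μ ∈ S, ∃ ν ∈ T, ξ = fun x => p * μ x + (1 - p) * ν x}

/-- The monad unit `η(x) = ↑{δ_x}`. -/
noncomputable def eta {X : Type*} (x : X) : Set (Option X → ℝ) := upClo {dirac (some x)}

/-- The loop characteristic functional. -/
noncomputable def Phi {St : Type*} (c : St → Set (Option St → ℝ)) (b : St → Bool)
    (f : St → Set (Option St → ℝ)) : St → Set (Option St → ℝ) :=
  fun σ => if b σ then kleisli f (c σ) else upClo {dirac (some σ)}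


/-- Every value of a distribution is at most 1. -/
lemma isDist_le_one {X : Type*} {μ : X → ℝ} (h : IsDist μ) (x : X) : μ x ≤ 1 :=
  le_hasSum h.2 x fun y _ => h.1 y

/-- Elements of `fbot f x` are distributions. -/
lemma mem_fbot_isDist {X Y : Type*} {f : X → Set (Option Y → ℝ)} (hf : ∀ x, memC (f x))
    (x : Option X) {ν : Option Y → ℝ} (hν : ν ∈ fbot f x) : IsDist ν := by
  cases x with
  | some x => exact (hf x).2.1 ν hν
  | none => exact hν.1

/-- `dirac none` is a distribution. -/
lemma isDist_dirac_none {Y : Type*} : IsDist (dirac (none : Option Y)) := by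
  constructor
  · intro y; unfold dirac; split <;> norm_num
  · have h := hasSum_ite_eq (none : Option Y) (1 : ℝ)
    refine h.congr_fun fun y => ?_
    simp [dirac]

/-- `fbot f x` is nonempty. -/
lemma fbot_nonempty {X Y : Type*} {f : X → Set (Option Y → ℝ)} (hf : ∀ x, memC (f x))
    (x : Option X) : (fbot f x).Nonempty := by
  cases x with
  | some x => exact (hf x).1
  | none =>
    exact ⟨dirac none, isDist_dirac_none, dirac none, rfl, fun _ => le_refl _⟩

/-- `fbot f x` is convex. -/
lemma fbot_convex {X Y : Type*} {f : X → Set (Option Y → ℝ)} (hf : ∀ x, memC (f x))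
    (x : Option X) : IsConvexSet (fbot f x) := by
  cases x with
  | some x => exact (hf x).2.2.1
  | none =>
    intro μ hμ ν hν q hq0 hq1
    refine ⟨⟨fun y => add_nonneg (mul_nonneg hq0 (hμ.1.1 y))
        (mul_nonneg (by linarith) (hν.1.1 y)), ?_⟩, dirac none, rfl, ?_⟩
    · have h1 : HasSum (fun y => q * μ y) q := by simpa using hμ.1.2.mul_left q
      have h2 : HasSum (fun y => (1 - q) * ν y) (1 - q) := by
        simpa using hν.1.2.mul_left (1 - q)
      simpa using h1.add h2
    · intro y
      have : (dirac (none : Option Y)) (some y) = 0 := by simp [dirac]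
      rw [this]
      exact add_nonneg (mul_nonneg hq0 (hμ.1.1 _)) (mul_nonneg (by linarith) (hν.1.1 _))

/-- Summability of the mixture terms. -/
lemma summable_mix {X Y : Type*} {μ : Option X → ℝ} (hμ : IsDist μ)
    {ν : Option X → Option Y → ℝ} (hν : ∀ x, IsDist (ν x)) (y : Option Y) :
    Summable (fun x => μ x * ν x y) := by
  refine Summable.of_nonneg_of_le (fun x => mul_nonneg (hμ.1 x) ((hν x).1 y))
    (fun x => ?_) hμ.2.summable
  exact mul_le_of_le_one_right (hμ.1 x) (isDist_le_one (hν x) y)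

/-- the Kleisli extension distributes over probabilistic choice of sets:
`f†(S ⊕_p T) = f†(S) ⊕_p f†(T)`. -/
theorem kleisli_pchoice {X Y : Type*} [Countable X] [Countable Y]
    (f : X → Set (Option Y → ℝ)) (hf : ∀ x, memC (f x))
    (p : ℝ) (hp0 : 0 ≤ p) (hp1 : p ≤ 1)
    (S T : Set (Option X → ℝ)) (hS : memC S) (hT : memC T) :
    kleisli f (pchoice p S T) = pchoice p (kleisli f S) (kleisli f T) := by
  ext ξ
  constructor
  · rintro ⟨μ, ⟨μ₁, h1, μ₂, h2, rfl⟩, ν, hν, hξ⟩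
    have hd1 : IsDist μ₁ := hS.2.1 μ₁ h1
    have hd2 : IsDist μ₂ := hT.2.1 μ₂ h2
    set ν' : Option X → Option Y → ℝ := fun x =>
      if 0 < p * μ₁ x + (1 - p) * μ₂ x then ν x else (fbot_nonempty hf x).some with hν'def
    have hν' : ∀ x, ν' x ∈ fbot f x := by
      intro x
      rw [hν'def]
      by_cases h : 0 < p * μ₁ x + (1 - p) * μ₂ x
      · simpa [h] using hν x h
      · simpa [h] using (fbot_nonempty hf x).some_mem
    have hdν' : ∀ x, IsDist (ν' x) := fun x => mem_fbot_isDist hf x (hν' x)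
    have hs1 : ∀ y, Summable (fun x => μ₁ x * ν' x y) := summable_mix hd1 hdν'
    have hs2 : ∀ y, Summable (fun x => μ₂ x * ν' x y) := summable_mix hd2 hdν'
    refine ⟨fun y => ∑' x, μ₁ x * ν' x y, ⟨μ₁, h1, ν', fun x _ => hν' x, fun _ => rfl⟩,
      fun y => ∑' x, μ₂ x * ν' x y, ⟨μ₂, h2, ν', fun x _ => hν' x, fun _ => rfl⟩, ?_⟩
    funext y
    rw [hξ y]
    have key : ∀ x, (p * μ₁ x + (1 - p) * μ₂ x) * ν x y
        = p * (μ₁ x * ν' x y) + (1 - p) * (μ₂ x * ν' x y) := by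
      intro x
      by_cases h : 0 < p * μ₁ x + (1 - p) * μ₂ x
      · rw [hν'def]; simp only [if_pos h]; ring
      · have hz : p * μ₁ x + (1 - p) * μ₂ x = 0 :=
          le_antisymm (not_lt.1 h)
            (add_nonneg (mul_nonneg hp0 (hd1.1 x)) (mul_nonneg (by linarith) (hd2.1 x)))
        have hz1 : p * μ₁ x = 0 := by
          have := mul_nonneg hp0 (hd1.1 x)
          have := mul_nonneg (show (0:ℝ) ≤ 1 - p by linarith) (hd2.1 x)
          linarith
        have hz2 : (1 - p) * μ₂ x = 0 := by linarith
        rw [hz]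
        rw [show p * (μ₁ x * ν' x y) = (p * μ₁ x) * ν' x y by ring,
          show (1 - p) * (μ₂ x * ν' x y) = ((1 - p) * μ₂ x) * ν' x y by ring,
          hz1, hz2]
        ring
    rw [tsum_congr key, Summable.tsum_add ((hs1 y).mul_left p) ((hs2 y).mul_left (1 - p)),
      tsum_mul_left, tsum_mul_left]
  · rintro ⟨ξ₁, ⟨μ₁, h1, ν₁, hν₁, hξ₁⟩, ξ₂, ⟨μ₂, h2, ν₂, hν₂, hξ₂⟩, rfl⟩
    have hd1 : IsDist μ₁ := hS.2.1 μ₁ h1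
    have hd2 : IsDist μ₂ := hT.2.1 μ₂ h2
    set ν₁' : Option X → Option Y → ℝ := fun x =>
      if h : 0 < μ₁ x then ν₁ x else (fbot_nonempty hf x).some with hν₁'def
    set ν₂' : Option X → Option Y → ℝ := fun x =>
      if h : 0 < μ₂ x then ν₂ x else (fbot_nonempty hf x).some with hν₂'def
    have hν₁' : ∀ x, ν₁' x ∈ fbot f x := by
      intro x; rw [hν₁'def]; by_cases h : 0 < μ₁ x
      · simpa [h] using hν₁ x h
      · simpa [h] using (fbot_nonempty hf x).some_mem
    have hν₂' : ∀ x, ν₂' x ∈ fbot f x := by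
      intro x; rw [hν₂'def]; by_cases h : 0 < μ₂ x
      · simpa [h] using hν₂ x h
      · simpa [h] using (fbot_nonempty hf x).some_mem
    have hdν₁' : ∀ x, IsDist (ν₁' x) := fun x => mem_fbot_isDist hf x (hν₁' x)
    have hdν₂' : ∀ x, IsDist (ν₂' x) := fun x => mem_fbot_isDist hf x (hν₂' x)
    set μ : Option X → ℝ := fun x => p * μ₁ x + (1 - p) * μ₂ x with hμdef
    have hμnn : ∀ x, 0 ≤ μ x := fun x =>
      add_nonneg (mul_nonneg hp0 (hd1.1 x)) (mul_nonneg (by linarith) (hd2.1 x))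
    set ν : Option X → Option Y → ℝ := fun x => fun y =>
      if 0 < μ x then (p * μ₁ x / μ x) * ν₁' x y + (1 - p * μ₁ x / μ x) * ν₂' x y
      else ν₁' x y with hνdef
    have hν : ∀ x, ν x ∈ fbot f x := by
      intro x
      rw [hνdef]
      by_cases h : 0 < μ x
      · simp only [if_pos h]
        have ha0 : 0 ≤ p * μ₁ x / μ x := div_nonneg (mul_nonneg hp0 (hd1.1 x)) h.le
        have ha1 : p * μ₁ x / μ x ≤ 1 := by
          rw [div_le_one h]
          have : 0 ≤ (1 - p) * μ₂ x := mul_nonneg (by linarith) (hd2.1 x)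
          rw [hμdef]; dsimp only; linarith
        exact fbot_convex hf x _ (hν₁' x) _ (hν₂' x) _ ha0 ha1
      · simp only [if_neg h]
        exact hν₁' x
    refine ⟨μ, ⟨μ₁, h1, μ₂, h2, rfl⟩, ν, fun x _ => hν x, fun y => ?_⟩
    show p * ξ₁ y + (1 - p) * ξ₂ y = _
    have e1 : ξ₁ y = ∑' x, μ₁ x * ν₁' x y := by
      rw [hξ₁ y]
      refine tsum_congr fun x => ?_
      rw [hν₁'def]
      by_cases h : 0 < μ₁ x
      · simp [h]
      · have : μ₁ x = 0 := le_antisymm (not_lt.1 h) (hd1.1 x)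
        simp [this]
    have e2 : ξ₂ y = ∑' x, μ₂ x * ν₂' x y := by
      rw [hξ₂ y]
      refine tsum_congr fun x => ?_
      rw [hν₂'def]
      by_cases h : 0 < μ₂ x
      · simp [h]
      · have : μ₂ x = 0 := le_antisymm (not_lt.1 h) (hd2.1 x)
        simp [this]
    rw [e1, e2, ← tsum_mul_left, ← tsum_mul_left,
      ← Summable.tsum_add ((summable_mix hd1 hdν₁' y).mul_left p)
        ((summable_mix hd2 hdν₂' y).mul_left (1 - p))]
    refine tsum_congr fun x => ?_
    by_cases h : 0 < μ x
    · have hne : μ x ≠ 0 := ne_of_gt h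
      rw [hνdef]
      simp only [if_pos h]
      field_simp
      ring
    · have hz : μ x = 0 := le_antisymm (not_lt.1 h) (hμnn x)
      have hz1 : p * μ₁ x = 0 := by
        have h1' := mul_nonneg hp0 (hd1.1 x)
        have h2' := mul_nonneg (show (0:ℝ) ≤ 1 - p by linarith) (hd2.1 x)
        have : p * μ₁ x + (1 - p) * μ₂ x = 0 := hz
        linarith
      have hz2 : (1 - p) * μ₂ x = 0 := by
        have : p * μ₁ x + (1 - p) * μ₂ x = 0 := hz
        linarith
      rw [hz, show p * (μ₁ x * ν₁' x y) = (p * μ₁ x) * ν₁' x y by ring,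
        show (1 - p) * (μ₂ x * ν₂' x y) = ((1 - p) * μ₂ x) * ν₂' x y by ring, hz1, hz2]
      ring

end DOL
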